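/- Let C be a k-dimensional ZMod 2-linear subspace of (Fin n → ZMod 2) and let p : Fin n → ℝ with 0 ≤ p i ≤ 1 be the coordinate 1-probabilities (not necessarily all equal and not necessarily below 1/2). Define the most probable vector x_max by x_max i = 1 if p i ≥ 1/2 and x_max i = 0 if p i < 1/2. Then the coset of C containing x_max is at least as probable as every coset: for every vector a, P_p[x_max + C] ≥ P_p[a + C]. -/

import Mathlib

noncomputable def sgn (b : ZMod 2) : ℝ := if b = 1 then -1 else 1

lemma zmod2_cases (b : ZMod 2) : b = 0 ∨ b = 1 := by
  have h : ∀ c : ZMod 2, c = 0 ∨ c = 1 := by decide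
  exact h b

lemma sgn_add (b b' : ZMod 2) : sgn (b + b') = sgn b * sgn b' := by
  rcases zmod2_cases b with hb | hb <;> rcases zmod2_cases b' with hb' | hb' <;>
    subst hb <;> subst hb' <;>
    simp [sgn, show ((1 : ZMod 2) + 1 = 0) from by decide,
      show ((0 : ZMod 2) ≠ 1) from by decide]

lemma sgn_cases (b : ZMod 2) : sgn b = 1 ∨ sgn b = -1 := by
  rcases zmod2_cases b with h | h <;> subst h <;>
    simp [sgn, show ((0 : ZMod 2) ≠ 1) from by decide]

lemma prod_sgn_cases {n : ℕ} (U : Finset (Fin n)) (x : Fin n → ZMod 2) :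
    (∏ i ∈ U, sgn (x i)) = 1 ∨ (∏ i ∈ U, sgn (x i)) = -1 := by
  induction U using Finset.induction with
  | empty => left; simp
  | insert _ _ h ih =>
    rw [Finset.prod_insert h]
    rcases sgn_cases (x _) with h1 | h1 <;> rcases ih with h2 | h2 <;>
      rw [h1, h2] <;> norm_num



open Classical in
/-- Probability of a set of bit-vectors under independent, not necessarily identically
distributed bits with coordinate 1-probabilities `p`. -/
noncomputable def probOf {n : ℕ} (p : Fin n → ℝ) (S : Set (Fin n → ZMod 2)) : ℝ :=
  ∑ x : Fin n → ZMod 2,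
    if x ∈ S then (∏ i, if x i = 1 then p i else 1 - p i) else 0

/-- The coset of a binary linear code containing the most probable vector
is at least as probable as every coset. -/
theorem most_probable_coset {n k : ℕ}
    (C : Submodule (ZMod 2) (Fin n → ZMod 2))
    (hk : Module.finrank (ZMod 2) C = k)
    (p : Fin n → ℝ) (hp : ∀ i, 0 ≤ p i ∧ p i ≤ 1)
    (xmax : Fin n → ZMod 2)
    (hxmax : ∀ i, xmax i = if (1 : ℝ) / 2 ≤ p i then 1 else 0)
    (a : Fin n → ZMod 2) :
    probOf p ((a + ·) '' (C : Set _)) ≤ probOf p ((xmax + ·) '' (C : Set _)) := by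
  classical
  set CF : Finset (Fin n → ZMod 2) := Finset.univ.filter (· ∈ C) with hCF
  have hmemCF : ∀ x, x ∈ CF ↔ x ∈ C := by
    intro x; simp [hCF]
  -- probOf of a coset as a sum over CF
  have hprob : ∀ b : Fin n → ZMod 2,
      probOf p ((b + ·) '' (C : Set _)) =
        ∑ c ∈ CF, ∏ i, if (b + c) i = 1 then p i else 1 - p i := by
    intro b
    unfold probOf
    rw [← Finset.sum_filter]
    have himg : Finset.univ.filter (· ∈ ((b + ·) '' (C : Set _)))
        = CF.image (b + ·) := by
      ext x
      simp [hCF, Set.mem_image, eq_comm]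
    rw [himg, Finset.sum_image]
    intro x _ y _ h
    exact add_left_cancel h
  rw [hprob, hprob]
  -- reparametrize the weights
  set γ : Fin n → ℝ := fun i => if xmax i = 1 then p i - 1/2 else 1/2 - p i with hγdef
  have hγ : ∀ i, 0 ≤ γ i := by
    intro i
    rcases zmod2_cases (xmax i) with h | h <;> rw [hγdef] <;> simp only [h]
    · have : ¬ ((1:ℝ)/2 ≤ p i) := by
        intro hle
        rw [hxmax i, if_pos hle] at h
        exact (show (1 : ZMod 2) ≠ 0 from by decide) h
      simp [show ((0:ZMod 2) ≠ 1) from by decide]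
      linarith
    · have : (1:ℝ)/2 ≤ p i := by
        by_contra hle
        rw [hxmax i, if_neg hle] at h
        exact (show (0 : ZMod 2) ≠ 1 from by decide) h
      simp
      linarith
  have hwfac : ∀ x : Fin n → ZMod 2,
      (∏ i, if x i = 1 then p i else 1 - p i)
        = ∏ i, (1/2 + γ i * sgn (x i + xmax i)) := by
    intro x
    refine Finset.prod_congr rfl fun i _ => ?_
    rcases zmod2_cases (x i) with h | h <;> rcases zmod2_cases (xmax i) with h' | h' <;>
      rw [h, h'] <;>
      simp [sgn, hγdef, h', show ((0:ZMod 2) ≠ 1) from by decide,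
        show ((1:ZMod 2) + 1 = 0) from by decide] <;> ring
  -- the key inequality
  have key : ∀ e : Fin n → ZMod 2,
      (∑ c ∈ CF, ∏ i, (1/2 + γ i * sgn (e i + c i)))
        ≤ ∑ c ∈ CF, ∏ i, (1/2 + γ i * sgn (c i)) := by
    intro e
    have expand : ∀ (f : Fin n → ZMod 2),
        (∏ i, ((1:ℝ)/2 + γ i * sgn (f i)))
          = ∑ T ∈ (Finset.univ : Finset (Fin n)).powerset,
              (∏ i ∈ T, (1:ℝ)/2) * ∏ i ∈ Finset.univ \ T, (γ i * sgn (f i)) := by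
      intro f
      exact Finset.prod_add _ _ _
    have hS : ∀ U : Finset (Fin n), 0 ≤ ∑ c ∈ CF, ∏ i ∈ U, sgn (c i) := by
      intro U
      by_cases hall : ∀ c ∈ CF, (∏ i ∈ U, sgn (c i)) = 1
      · rw [Finset.sum_congr rfl hall]
        simp
      · push_neg at hall
        obtain ⟨c0, hc0, hne⟩ := hall
        have hc0v : (∏ i ∈ U, sgn (c0 i)) = -1 :=
          (prod_sgn_cases U c0).resolve_left hne
        have hbij : (∑ c ∈ CF, ∏ i ∈ U, sgn (c i))
            = ∑ c ∈ CF, ∏ i ∈ U, sgn ((c0 + c) i) := by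
          refine Finset.sum_nbij' (fun c => c0 + c) (fun c => c0 + c) ?_ ?_ ?_ ?_ ?_
          · intro c hc
            rw [hmemCF] at hc0 hc ⊢
            exact C.add_mem hc0 hc
          · intro c hc
            rw [hmemCF] at hc0 hc ⊢
            exact C.add_mem hc0 hc
          · intro c _
            funext i
            show c0 i + (c0 i + c i) = c i
            have : ∀ u v : ZMod 2, u + (u + v) = v := by decide
            exact this _ _
          · intro c _
            funext i
            show c0 i + (c0 i + c i) = c i
            have : ∀ u v : ZMod 2, u + (u + v) = v := by decide
            exact this _ _
          · intro c _
            have hcc : c0 + (c0 + c) = c := by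
              funext i
              exact (show ∀ u v : ZMod 2, u + (u + v) = v from by decide) _ _
            rw [hcc]
        have hneg : (∑ c ∈ CF, ∏ i ∈ U, sgn ((c0 + c) i))
            = - ∑ c ∈ CF, ∏ i ∈ U, sgn (c i) := by
          rw [← Finset.sum_neg_distrib]
          refine Finset.sum_congr rfl fun c _ => ?_
          have : (∏ i ∈ U, sgn ((c0 + c) i))
              = (∏ i ∈ U, sgn (c0 i)) * ∏ i ∈ U, sgn (c i) := by
            rw [← Finset.prod_mul_distrib]
            exact Finset.prod_congr rfl fun i _ => sgn_add _ _
          rw [this, hc0v]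
          ring
        have := hbij.trans hneg
        linarith
    calc (∑ c ∈ CF, ∏ i, ((1:ℝ)/2 + γ i * sgn (e i + c i)))
        = ∑ T ∈ (Finset.univ : Finset (Fin n)).powerset,
            ∑ c ∈ CF, (∏ i ∈ T, (1:ℝ)/2) * ∏ i ∈ Finset.univ \ T, (γ i * sgn (e i + c i)) := by
          rw [Finset.sum_comm]
          exact Finset.sum_congr rfl fun c _ => expand (fun i => e i + c i)
      _ ≤ ∑ T ∈ (Finset.univ : Finset (Fin n)).powerset,
            ∑ c ∈ CF, (∏ i ∈ T, (1:ℝ)/2) * ∏ i ∈ Finset.univ \ T, (γ i * sgn (c i)) := by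
          refine Finset.sum_le_sum fun T _ => ?_
          set U := Finset.univ \ T with hU
          have hsplit : ∀ (f : Fin n → ZMod 2),
              (∏ i ∈ U, (γ i * sgn (f i))) = (∏ i ∈ U, γ i) * ∏ i ∈ U, sgn (f i) :=
            fun f => Finset.prod_mul_distrib
          have hsgnsplit : ∀ c : Fin n → ZMod 2,
              (∏ i ∈ U, sgn (e i + c i)) = (∏ i ∈ U, sgn (e i)) * ∏ i ∈ U, sgn (c i) := by
            intro c
            rw [← Finset.prod_mul_distrib]
            exact Finset.prod_congr rfl fun i _ => sgn_add _ _
          have hK : (0:ℝ) ≤ ∏ i ∈ T, (1:ℝ)/2 := Finset.prod_nonneg fun i _ => by norm_num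
          have hG : (0:ℝ) ≤ ∏ i ∈ U, γ i := Finset.prod_nonneg fun i _ => hγ i
          have hχ : (∏ i ∈ U, sgn (e i)) ≤ 1 := by
            rcases prod_sgn_cases U e with h | h <;> rw [h] <;> norm_num
          calc (∑ c ∈ CF, (∏ i ∈ T, (1:ℝ)/2) * ∏ i ∈ U, (γ i * sgn (e i + c i)))
              = (∏ i ∈ T, (1:ℝ)/2) * (∏ i ∈ U, γ i) * ((∏ i ∈ U, sgn (e i))
                  * ∑ c ∈ CF, ∏ i ∈ U, sgn (c i)) := by
                simp only [Finset.mul_sum]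
                refine Finset.sum_congr rfl fun c _ => ?_
                rw [hsplit, hsgnsplit]
                ring
            _ ≤ (∏ i ∈ T, (1:ℝ)/2) * (∏ i ∈ U, γ i) * (1 * ∑ c ∈ CF, ∏ i ∈ U, sgn (c i)) := by
                have := hS U
                have hmul : (∏ i ∈ U, sgn (e i)) * (∑ c ∈ CF, ∏ i ∈ U, sgn (c i))
                    ≤ 1 * ∑ c ∈ CF, ∏ i ∈ U, sgn (c i) :=
                  mul_le_mul_of_nonneg_right hχ this
                exact mul_le_mul_of_nonneg_left hmul (mul_nonneg hK hG)
            _ = ∑ c ∈ CF, (∏ i ∈ T, (1:ℝ)/2) * ∏ i ∈ U, (γ i * sgn (c i)) := by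
                simp only [one_mul, Finset.mul_sum]
                refine Finset.sum_congr rfl fun c _ => ?_
                rw [hsplit]
                ring
      _ = ∑ c ∈ CF, ∏ i, ((1:ℝ)/2 + γ i * sgn (c i)) := by
          rw [Finset.sum_comm]
          exact Finset.sum_congr rfl fun c _ => (expand (fun i => c i)).symm
  -- assemble
  have hL : (∑ c ∈ CF, ∏ i, if (a + c) i = 1 then p i else 1 - p i)
      = ∑ c ∈ CF, ∏ i, ((1:ℝ)/2 + γ i * sgn ((a i + xmax i) + c i)) := by
    refine Finset.sum_congr rfl fun c _ => ?_
    rw [hwfac]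
    refine Finset.prod_congr rfl fun i _ => ?_
    have : (a + c) i + xmax i = (a i + xmax i) + c i := by
      show a i + c i + xmax i = a i + xmax i + c i
      ring
    rw [this]
  have hR : (∑ c ∈ CF, ∏ i, if (xmax + c) i = 1 then p i else 1 - p i)
      = ∑ c ∈ CF, ∏ i, ((1:ℝ)/2 + γ i * sgn (c i)) := by
    refine Finset.sum_congr rfl fun c _ => ?_
    rw [hwfac]
    refine Finset.prod_congr rfl fun i _ => ?_
    have : (xmax + c) i + xmax i = c i := by
      show xmax i + c i + xmax i = c i
      have : ∀ u v : ZMod 2, u + v + u = v := by decide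
      exact this _ _
    rw [this]
  rw [hL, hR]
  exact key _
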